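/- (Ball-to-ball rank bound for the 2D Fourier kernel.) There exists an absolute constant C > 0 such that for all reals b > 0, R > 0, and 0 < ε < 1, there exist a natural number r with r ≤ C·(bR + log(1/ε) + 1)^2 and functions u_1,…,u_r : ℝ² → ℂ and v_1,…,v_r : ℝ² → ℂ such that for every x ∈ ℝ² with ‖x‖ ≤ R and every ω ∈ ℝ² with ‖ω‖ ≤ b, one has |e^{i ω·x} − Σ_{ℓ=1}^r u_ℓ(x)·conj(v_ℓ(ω))| ≤ ε. -/

import Mathlib

open Finset
open scoped Nat

-- termwise tail bound
lemma tail_le (a : ℝ) (ha : 0 ≤ a) (n : ℕ) :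
    ∑' m : ℕ, a ^ (m + n) / (m + n)! ≤ a ^ n / n ! * Real.exp a := by
  have hs : Summable (fun m : ℕ => a ^ m / m !) := Real.summable_pow_div_factorial a
  have hs2 : Summable (fun m : ℕ => a ^ (m + n) / (m + n)!) :=
    (summable_nat_add_iff n).mpr hs
  have hterm : ∀ m : ℕ, a ^ (m + n) / (m + n)! ≤ a ^ n / n ! * (a ^ m / m !) := by
    intro m
    have h1 : (0:ℝ) < (m ! : ℝ) * n ! := by positivity
    have h2 : ((m ! : ℝ) * n !) ≤ (m + n)! := by
      exact_mod_cast Nat.le_of_dvd (Nat.factorial_pos _)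
        (Nat.factorial_mul_factorial_dvd_factorial_add m n)
    calc a ^ (m + n) / (m + n)! ≤ a ^ (m + n) / ((m ! : ℝ) * n !) :=
          div_le_div_of_nonneg_left (by positivity) h1 h2
      _ = a ^ n / n ! * (a ^ m / m !) := by rw [pow_add]; ring
  calc ∑' m : ℕ, a ^ (m + n) / (m + n)!
      ≤ ∑' m : ℕ, a ^ n / n ! * (a ^ m / m !) :=
        Summable.tsum_le_tsum hterm hs2 (hs.mul_left _)
    _ = a ^ n / n ! * Real.exp a := by
        rw [tsum_mul_left]
        congr 1
        rw [Real.exp_eq_exp_ℝ, NormedSpace.exp_eq_tsum_div]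

lemma geom_bd (a : ℝ) (ha : 0 ≤ a) (N : ℕ) (hN : 2 * a ≤ N) (M : ℕ) :
    a ^ (N + M) / (N + M)! ≤ a ^ N / N ! * (1 / 2) ^ M := by
  induction M with
  | zero => simp
  | succ M ih =>
      have h1 : (0:ℝ) < (N:ℝ) + M + 1 := by positivity
      have hfac : ((N + M)! : ℝ) ≠ 0 := by positivity
      have key : a ^ (N + (M + 1)) / ((N + (M + 1))! : ℝ)
          = a ^ (N + M) / (N + M)! * (a / ((N:ℝ) + M + 1)) := by
        rw [← Nat.add_assoc, Nat.factorial_succ, pow_succ, Nat.cast_mul, div_mul_div_comm]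
        push_cast
        ring
      have hc : a / ((N:ℝ) + M + 1) ≤ 1 / 2 := by
        rw [div_le_div_iff₀ h1 two_pos]
        have hM0 : (0:ℝ) ≤ (M:ℝ) := Nat.cast_nonneg M
        linarith
      rw [key]
      calc a ^ (N + M) / (N + M)! * (a / ((N:ℝ) + M + 1))
          ≤ a ^ N / N ! * (1 / 2) ^ M * (1 / 2) :=
            mul_le_mul ih hc (by positivity) (by positivity)
        _ = a ^ N / N ! * (1 / 2) ^ (M + 1) := by ring

lemma taylor_rem (z : ℂ) (n : ℕ) :
    ‖Complex.exp z - ∑ k ∈ range n, z ^ k / (k ! : ℂ)‖ ≤ ∑' m : ℕ, ‖z‖ ^ (m + n) / (m + n)! := by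
  have hsum : Summable (fun k : ℕ => z ^ k / (k ! : ℂ)) := NormedSpace.expSeries_div_summable z
  have hexp : Complex.exp z = ∑' k : ℕ, z ^ k / k ! := by
    rw [Complex.exp_eq_exp_ℂ, NormedSpace.exp_eq_tsum_div]
  have hsplit := Summable.sum_add_tsum_nat_add n hsum
  have hrem : Complex.exp z - ∑ k ∈ range n, z ^ k / (k ! : ℂ)
      = ∑' m : ℕ, z ^ (m + n) / ((m + n)! : ℂ) := by
    rw [hexp, ← hsplit]; ring
  rw [hrem]
  have hnorm : ∀ m : ℕ, ‖z ^ (m + n) / ((m + n)! : ℂ)‖ = ‖z‖ ^ (m + n) / (m + n)! := by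
    intro m
    rw [norm_div, norm_pow]
    congr 1
    simp
  have hsn : Summable (fun m : ℕ => ‖z‖ ^ (m + n) / ((m + n)! : ℝ)) :=
    (summable_nat_add_iff n).mpr (Real.summable_pow_div_factorial ‖z‖)
  calc ‖∑' m : ℕ, z ^ (m + n) / ((m + n)! : ℂ)‖
      ≤ ∑' m : ℕ, ‖z ^ (m + n) / ((m + n)! : ℂ)‖ :=
        norm_tsum_le_tsum_norm (by simpa only [hnorm] using hsn)
    _ = ∑' m : ℕ, ‖z‖ ^ (m + n) / (m + n)! := by simp only [hnorm]
open scoped InnerProductSpace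

noncomputable def Uaux (n : ℕ) (p : Fin n × Fin n) (x : EuclideanSpace ℝ (Fin 2)) : ℂ :=
  if (p.2 : ℕ) ≤ (p.1 : ℕ) then
    Complex.I ^ (p.1 : ℕ) * ((p.1 : ℕ).choose (p.2 : ℕ) : ℂ) / ((p.1 : ℕ)! : ℂ) *
      (x 0 : ℂ) ^ (p.2 : ℕ) * (x 1 : ℂ) ^ ((p.1 : ℕ) - (p.2 : ℕ))
  else 0

noncomputable def Vaux (n : ℕ) (p : Fin n × Fin n) (ω : EuclideanSpace ℝ (Fin 2)) : ℂ :=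
  (ω 0 : ℂ) ^ (p.2 : ℕ) * (ω 1 : ℂ) ^ ((p.1 : ℕ) - (p.2 : ℕ))

lemma key_sum (n : ℕ) (x ω : EuclideanSpace ℝ (Fin 2)) :
    ∑ ℓ : Fin (n * n), Uaux n (finProdFinEquiv.symm ℓ) x *
        (starRingEnd ℂ) (Vaux n (finProdFinEquiv.symm ℓ) ω) =
    ∑ k ∈ range n, (Complex.I * ((⟪ω, x⟫_ℝ : ℝ) : ℂ)) ^ k / (k ! : ℂ) := by
  have ht : ((⟪ω, x⟫_ℝ : ℝ) : ℂ) = (ω 0 : ℂ) * (x 0 : ℂ) + (ω 1 : ℂ) * (x 1 : ℂ) := by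
    simp [PiLp.inner_apply, RCLike.inner_apply, Fin.sum_univ_two]
    ring
  have hconj : ∀ p : Fin n × Fin n, (starRingEnd ℂ) (Vaux n p ω) = Vaux n p ω := by
    intro p
    simp [Vaux, map_mul, map_pow, Complex.conj_ofReal]
  rw [Equiv.sum_comp finProdFinEquiv.symm
    (fun p => Uaux n p x * (starRingEnd ℂ) (Vaux n p ω))]
  simp only [hconj]
  rw [Fintype.sum_prod_type]
  rw [← Fin.sum_univ_eq_sum_range
    (fun k => (Complex.I * ((⟪ω, x⟫_ℝ : ℝ) : ℂ)) ^ k / (k ! : ℂ)) n]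
  refine Finset.sum_congr rfl fun k _ => ?_
  have hk : (k : ℕ) < n := k.isLt
  -- inner sum over j
  have step1 : ∀ j : Fin n, Uaux n (k, j) x * Vaux n (k, j) ω =
      if (j : ℕ) ≤ (k : ℕ) then
        Complex.I ^ (k : ℕ) * ((k : ℕ).choose (j : ℕ) : ℂ) / ((k : ℕ)! : ℂ) *
          (x 0 : ℂ) ^ (j : ℕ) * (x 1 : ℂ) ^ ((k : ℕ) - (j : ℕ)) *
          ((ω 0 : ℂ) ^ (j : ℕ) * (ω 1 : ℂ) ^ ((k : ℕ) - (j : ℕ)))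
      else 0 := by
    intro j
    simp only [Uaux, Vaux, ite_mul, zero_mul]
  simp only [step1]
  rw [Fin.sum_univ_eq_sum_range (fun j =>
      if j ≤ (k : ℕ) then
        Complex.I ^ (k : ℕ) * ((k : ℕ).choose j : ℂ) / ((k : ℕ)! : ℂ) *
          (x 0 : ℂ) ^ j * (x 1 : ℂ) ^ ((k : ℕ) - j) *
          ((ω 0 : ℂ) ^ j * (ω 1 : ℂ) ^ ((k : ℕ) - j))
      else 0) n]
  have hsub : Finset.range ((k : ℕ) + 1) ⊆ Finset.range n := Finset.range_subset_range.mpr hk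
  rw [← Finset.sum_subset hsub (fun j _ hj => if_neg (by
    simp only [Finset.mem_range, Nat.lt_succ_iff] at hj; omega))]
  rw [Finset.sum_congr rfl (fun j hj => if_pos
    (Nat.lt_succ_iff.mp (Finset.mem_range.mp hj)))]
  rw [mul_pow, ht, add_pow, Finset.mul_sum, Finset.sum_div]
  refine Finset.sum_congr rfl fun j hj => ?_
  rw [mul_pow, mul_pow]
  ring
set_option maxHeartbeats 1000000 in
theorem stmt2 :
    ∃ C : ℝ, 0 < C ∧
      ∀ b R ε : ℝ, 0 < b → 0 < R → 0 < ε → ε < 1 →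
        ∃ r : ℕ, (r : ℝ) ≤ C * (b * R + Real.log (1 / ε) + 1) ^ 2 ∧
          ∃ u v : Fin r → EuclideanSpace ℝ (Fin 2) → ℂ,
            ∀ x ω : EuclideanSpace ℝ (Fin 2), ‖x‖ ≤ R → ‖ω‖ ≤ b →
              ‖Complex.exp (Complex.I * (⟪ω, x⟫_ℝ : ℝ)) -
                ∑ ℓ : Fin r, u ℓ x * (starRingEnd ℂ) (v ℓ ω)‖ ≤ ε := by
  refine ⟨36, by norm_num, ?_⟩
  intro b R ε hb hR hε hε1
  set a : ℝ := b * R with ha_def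
  have ha : 0 < a := mul_pos hb hR
  set L : ℝ := Real.log (1 / ε) with hL_def
  have hL : 0 < L := Real.log_pos (by rw [lt_div_iff₀ hε]; linarith)
  have hlog2 : 0 < Real.log 2 := Real.log_pos one_lt_two
  set N : ℕ := ⌈2 * a⌉₊ with hN_def
  set M : ℕ := ⌈(2 * a + L) / Real.log 2⌉₊ with hM_def
  set n : ℕ := N + M with hn_def
  refine ⟨n * n, ?_, ?_⟩
  · -- rank bound
    have hlog2' : (1:ℝ)/2 ≤ Real.log 2 := by
      have := Real.log_two_gt_d9
      linarith
    have hNb : (N : ℝ) ≤ 2 * a + 1 := (Nat.ceil_lt_add_one (by positivity)).le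
    have hMb : (M : ℝ) ≤ (2 * a + L) / Real.log 2 + 1 :=
      (Nat.ceil_lt_add_one (by positivity)).le
    have hdiv : (2 * a + L) / Real.log 2 ≤ 2 * (2 * a + L) := by
      rw [div_le_iff₀ hlog2]
      nlinarith
    have hn : (n : ℝ) ≤ 6 * (a + L + 1) := by
      have : (n : ℝ) = (N : ℝ) + (M : ℝ) := by push_cast [hn_def]; ring
      rw [this]
      nlinarith
    have hn0 : (0:ℝ) ≤ (n:ℝ) := Nat.cast_nonneg n
    calc ((n * n : ℕ) : ℝ) = (n : ℝ) * (n : ℝ) := by push_cast; ring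
      _ ≤ (6 * (a + L + 1)) * (6 * (a + L + 1)) := mul_le_mul hn hn hn0 (by positivity)
      _ = 36 * (a + L + 1) ^ 2 := by ring
  · -- functions
    refine ⟨fun ℓ x => Uaux n (finProdFinEquiv.symm ℓ) x,
      fun ℓ ω => Vaux n (finProdFinEquiv.symm ℓ) ω, ?_⟩
    intro x ω hx hω
    beta_reduce
    rw [key_sum n x ω]
    set t : ℝ := ⟪ω, x⟫_ℝ with ht_def
    set z : ℂ := Complex.I * (t : ℂ) with hz_def
    have hzn : ‖z‖ = |t| := by
      rw [hz_def, norm_mul, Complex.norm_I, one_mul, Complex.norm_real, Real.norm_eq_abs]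
    have hta : ‖z‖ ≤ a := by
      rw [hzn]
      calc |t| ≤ ‖ω‖ * ‖x‖ := abs_real_inner_le_norm ω x
        _ ≤ b * R := mul_le_mul hω hx (norm_nonneg x) hb.le
    have hsn : Summable (fun m : ℕ => ‖z‖ ^ (m + n) / ((m + n)! : ℝ)) :=
      (summable_nat_add_iff n).mpr (Real.summable_pow_div_factorial ‖z‖)
    have hsa : Summable (fun m : ℕ => a ^ (m + n) / ((m + n)! : ℝ)) :=
      (summable_nat_add_iff n).mpr (Real.summable_pow_div_factorial a)
    have hexpN : a ^ N / (N ! : ℝ) ≤ Real.exp a := by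
      calc a ^ N / (N ! : ℝ) ≤ ∑ i ∈ Finset.range (N + 1), a ^ i / (i ! : ℝ) := by
            refine Finset.single_le_sum (f := fun i => a ^ i / (i ! : ℝ))
              (fun i _ => by positivity) (Finset.self_mem_range_succ N)
        _ ≤ Real.exp a := Real.sum_le_exp_of_nonneg ha.le _
    have hN2a : 2 * a ≤ (N : ℝ) := Nat.le_ceil _
    have hMge : (2 * a + L) / Real.log 2 ≤ (M : ℝ) := Nat.le_ceil _
    have hfin : Real.exp a * (1 / 2) ^ M * Real.exp a ≤ ε := by
      have h1 : 2 * a + L ≤ (M : ℝ) * Real.log 2 := by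
        rwa [div_le_iff₀ hlog2] at hMge
      have h2 : ((1:ℝ) / 2) ^ M = Real.exp (-((M : ℝ) * Real.log 2)) := by
        rw [Real.exp_neg, Real.exp_nat_mul, Real.exp_log two_pos, ← inv_pow, one_div]
      rw [h2, ← Real.exp_add, ← Real.exp_add]
      have hLε : L = -Real.log ε := by rw [hL_def, one_div, Real.log_inv]
      have h3 : a + -((M : ℝ) * Real.log 2) + a ≤ Real.log ε := by
        rw [hLε] at h1; linarith
      calc Real.exp (a + -((M : ℝ) * Real.log 2) + a)
          ≤ Real.exp (Real.log ε) := Real.exp_le_exp.mpr h3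
        _ = ε := Real.exp_log hε
    calc ‖Complex.exp z - ∑ k ∈ Finset.range n, z ^ k / (k ! : ℂ)‖
        ≤ ∑' m : ℕ, ‖z‖ ^ (m + n) / ((m + n)! : ℝ) := taylor_rem z n
      _ ≤ ∑' m : ℕ, a ^ (m + n) / ((m + n)! : ℝ) := by
          refine Summable.tsum_le_tsum (fun m => ?_) hsn hsa
          gcongr
      _ ≤ a ^ n / (n ! : ℝ) * Real.exp a := tail_le a ha.le n
      _ ≤ a ^ N / (N ! : ℝ) * (1 / 2) ^ M * Real.exp a := by
          have := geom_bd a ha.le N hN2a M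
          rw [hn_def]
          exact mul_le_mul_of_nonneg_right this (Real.exp_nonneg a)
      _ ≤ Real.exp a * (1 / 2) ^ M * Real.exp a := by
          refine mul_le_mul_of_nonneg_right
            (mul_le_mul_of_nonneg_right hexpN (by positivity)) (Real.exp_nonneg a)
      _ ≤ ε := hfin
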